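/- Assume α̃ < 1 (hence 0 < r < 1). Then the probability that the server is in a regular busy period satisfies P(J=1) = Σ_{k≥1} π_{k1} = K·p(0)θ / (p̄(1)μ_b(1−α̃)(1−r)). -/

import Mathlib

lemma aux_r_bounds (be x y d r : ℝ) (hbe : 0 < be) (hx : 0 < x) (hy : 0 < y)
    (hd : d = (be + x + y) ^ 2 - 4 * x * y)
    (hr : r = (be + x + y - Real.sqrt d) / (2 * y)) : 0 < r ∧ r < 1 := by
  set a := be + x + y with ha
  have ha0 : 0 < a := by positivity
  have hd0 : 0 < d := by rw [hd]; nlinarith [sq_nonneg (x - y)]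
  set s := Real.sqrt d with hs
  have hs0 : 0 ≤ s := Real.sqrt_nonneg _
  have hs1 : 0 < s := Real.sqrt_pos.mpr hd0
  have hs2 : s ^ 2 = d := Real.sq_sqrt hd0.le
  have hslt : s < a := by
    have hlt : d < a ^ 2 := by rw [hd]; nlinarith
    calc s < Real.sqrt (a ^ 2) := Real.sqrt_lt_sqrt hd0.le hlt
    _ = a := Real.sqrt_sq ha0.le
  constructor
  · rw [hr]
    exact div_pos (by linarith) (by positivity)
  · have hnum : a - s < 2 * y := by
      rcases le_or_gt (a - 2 * y) 0 with h | h
      · linarith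
      · have hsq : (a - 2 * y) ^ 2 < s ^ 2 := by rw [hs2, hd]; nlinarith
        have := lt_of_pow_lt_pow_left₀ 2 hs0 hsq
        linarith
    rw [hr, div_lt_one (by positivity)]
    linarith

/-- Geo/Geo/1 with multiple working vacations, partially observable case.
P(J = 1) = Σ_{k≥1} π_{k1} = K p(0) θ / (p̄(1) μ_b (1-α̃)(1-r)). -/
theorem stmt_7
    (p μb μv θ q0 q1 p0 p1 al be r K : ℝ) (π0 π1 : ℕ → ℝ)
    (hp : p ∈ Set.Ioo (0:ℝ) 1) (hμb : μb ∈ Set.Ioo (0:ℝ) 1)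
    (hμv : μv ∈ Set.Ioo (0:ℝ) 1) (hθ : θ ∈ Set.Ioo (0:ℝ) 1)
    (hq0 : q0 ∈ Set.Icc (0:ℝ) 1) (hq1 : q1 ∈ Set.Icc (0:ℝ) 1)
    (hp0 : p0 = p * q0) (hp1 : p1 = p * q1)
    (hp0m : p0 ∈ Set.Ioo (0:ℝ) 1) (hp1m : p1 ∈ Set.Ioo (0:ℝ) 1)
    (hal : al = p1 * (1 - μb) / ((1 - p1) * μb))
    (hbe : be = θ / (1 - θ))
    (hr : r = (be + p0 * (1 - μv) + (1 - p0) * μv -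
        Real.sqrt ((be + p0 * (1 - μv) + (1 - p0) * μv) ^ 2 -
          4 * p0 * (1 - p0) * μv * (1 - μv))) / (2 * (1 - p0) * μv))
    (hK : K = (1 - p1) * μb * (1 - r) * (1 - al) /
        ((1 - p1) * μb * (1 - r) * (1 - al) *
          (θ + (1 - θ) * (1 - p0) * μv * (1 - r) + p0 * (1 - θ)) + p0 * θ))
    (hπ00 : π0 0 = K * (θ + (1 - θ) * (1 - p0) * μv * (1 - r)))
    (hπ0k : ∀ k : ℕ, 1 ≤ k → π0 k = K * p0 * (1 - θ) * (1 - r) * r ^ (k - 1))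
    (hπ1k : ∀ k : ℕ, 1 ≤ k →
      π1 k = K * (p0 * θ / ((1 - p1) * μb)) * ∑ j ∈ Finset.range k, r ^ j * al ^ (k - 1 - j))
    (hal1 : al < 1) :
    Summable (fun k : ℕ => π1 (k + 1)) ∧
    (∑' k : ℕ, π1 (k + 1)) = K * p0 * θ / ((1 - p1) * μb * (1 - al) * (1 - r)) := by
  obtain ⟨hp0a, hp0b⟩ := hp0m
  obtain ⟨hp1a, hp1b⟩ := hp1m
  obtain ⟨hμva, hμvb⟩ := hμv
  obtain ⟨hμba, hμbb⟩ := hμb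
  obtain ⟨hθa, hθb⟩ := hθ
  -- basic positivity
  have hbe0 : 0 < be := by rw [hbe]; exact div_pos hθa (by linarith)
  obtain ⟨hr0, hr1⟩ := aux_r_bounds be (p0 * (1 - μv)) ((1 - p0) * μv)
      ((be + p0 * (1 - μv) + (1 - p0) * μv) ^ 2 - 4 * p0 * (1 - p0) * μv * (1 - μv)) r
      hbe0 (mul_pos hp0a (by linarith)) (mul_pos (by linarith) hμva) (by ring)
      (by rw [hr]; ring_nf)
  have hal0 : 0 < al := by
    rw [hal]
    exact div_pos (mul_pos hp1a (by linarith)) (mul_pos (by linarith) hμba)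
  -- geometric series facts
  have hfr : Summable fun n : ℕ => ‖r ^ n‖ := by
    simpa [abs_of_nonneg (pow_nonneg hr0.le _)] using summable_geometric_of_lt_one hr0.le hr1
  have hfa : Summable fun n : ℕ => ‖al ^ n‖ := by
    simpa [abs_of_nonneg (pow_nonneg hal0.le _)] using summable_geometric_of_lt_one hal0.le hal1
  have hsum : Summable fun n : ℕ => ∑ j ∈ Finset.range (n + 1), r ^ j * al ^ (n - j) :=
    (summable_norm_sum_mul_range_of_summable_norm hfr hfa).of_norm
  have htsum : (∑' n : ℕ, r ^ n) * (∑' n : ℕ, al ^ n) =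
      ∑' n : ℕ, ∑ j ∈ Finset.range (n + 1), r ^ j * al ^ (n - j) :=
    tsum_mul_tsum_eq_tsum_sum_range_of_summable_norm hfr hfa
  set C := K * (p0 * θ / ((1 - p1) * μb)) with hC
  have hπeq : ∀ k : ℕ, π1 (k + 1) = C * ∑ j ∈ Finset.range (k + 1), r ^ j * al ^ (k - j) := by
    intro k
    rw [hπ1k (k + 1) (by omega)]
    simp
  have hsum2 : Summable (fun k : ℕ => π1 (k + 1)) := by
    simpa [hπeq] using hsum.mul_left C
  refine ⟨hsum2, ?_⟩
  have hval : (∑' k : ℕ, π1 (k + 1)) = C * ((1 - r)⁻¹ * (1 - al)⁻¹) := by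
    calc (∑' k : ℕ, π1 (k + 1))
        = ∑' k : ℕ, C * ∑ j ∈ Finset.range (k + 1), r ^ j * al ^ (k - j) := by
          exact tsum_congr hπeq
      _ = C * ∑' k : ℕ, ∑ j ∈ Finset.range (k + 1), r ^ j * al ^ (k - j) := tsum_mul_left
      _ = C * ((∑' n : ℕ, r ^ n) * (∑' n : ℕ, al ^ n)) := by rw [htsum]
      _ = C * ((1 - r)⁻¹ * (1 - al)⁻¹) := by
          rw [tsum_geometric_of_lt_one hr0.le hr1, tsum_geometric_of_lt_one hal0.le hal1]
  rw [hval, hC]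
  have h1 : (1 - p1) * μb ≠ 0 := ne_of_gt (mul_pos (by linarith) hμba)
  have h2 : (1 - r) ≠ 0 := by linarith
  have h3 : (1 - al) ≠ 0 := by linarith
  field_simp
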